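/- arXiv:math-ph/0512075 — 2 statements merged into one kernel-verified Lean document; each statement's English description precedes it below -/
import Mathlib

section
/- Let H be a complex Hilbert space, S unitary on H, and define for t ∈ ℝ the map V^t on L²(ℝ, H) by (V^t χ)(z) = e^{(i/ħ)zH} S^{Δ₀ᵗ(z+t)} e^{−(i/ħ)(z+t)H} χ(z+t), where Δ₀ᵗ(s) = 1_t(s) − 1_0(s) and H is a bounded self-adjoint operator. Then each V^t is unitary and t ↦ V^t is a one-parameter group: V^r V^t = V^{r+t} for all r, t ∈ ℝ. -/
open MeasureTheory

noncomputable section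

variable {H : Type*} [NormedAddCommGroup H] [InnerProductSpace ℂ H] [CompleteSpace H]

/-- `expIH ħ Hop r = e^{(i/ħ) r Hop}`. -/
def expIH (hbar : ℝ) (Hop : H →L[ℂ] H) (r : ℝ) : H →L[ℂ] H :=
  NormedSpace.exp (((r / hbar : ℝ) : ℂ) • Complex.I • Hop)

/-- `Δ₀ᵗ(s) = 1_t(s) − 1_0(s)` with `1_t` the indicator of `(−∞, t)`. -/
def DeltaZ (t s : ℝ) : ℤ := (if s < t then 1 else 0) - (if s < 0 then 1 else 0)

/-- The resolving evolution of the Dirac boundary value problem: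
`(V^t χ)(z) = e^{(i/ħ)zH} S^{Δ₀ᵗ(z+t)} e^{−(i/ħ)(z+t)H} χ(z+t)`. -/
def Vgrp (hbar : ℝ) (Hop : H →L[ℂ] H) (S : unitary (H →L[ℂ] H)) (t : ℝ)
    (χ : ℝ → H) : ℝ → H := fun z =>
  expIH hbar Hop z
    (((S ^ DeltaZ t (z + t) : unitary (H →L[ℂ] H)) : H →L[ℂ] H)
      (expIH hbar Hop (-(z + t)) (χ (z + t))))

set_option maxHeartbeats 2000000 in
lemma expIH_mem_unitary (hbar : ℝ) (Hop : H →L[ℂ] H) (hH : IsSelfAdjoint Hop) (r : ℝ) :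
    expIH hbar Hop r ∈ unitary (H →L[ℂ] H) := by
  let +nondep : NormedAlgebra ℚ (H →L[ℂ] H) := .restrictScalars ℚ ℂ (H →L[ℂ] H)
  rw [expIH, smul_comm]
  refine NormedSpace.exp_mem_unitary_of_mem_skewAdjoint ?_
  rw [skewAdjoint.mem_iff, star_smul, star_smul, hH.star_eq]
  simp [← neg_smul]

lemma expIH_add (hbar : ℝ) (Hop : H →L[ℂ] H) (a b : ℝ) :
    expIH hbar Hop a * expIH hbar Hop b = expIH hbar Hop (a + b) := by
  let +nondep : NormedAlgebra ℚ (H →L[ℂ] H) := .restrictScalars ℚ ℂ (H →L[ℂ] H)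
  rw [expIH, expIH, expIH, ← NormedSpace.exp_add_of_commute]
  · congr 1
    rw [← add_smul]
    norm_cast
    rw [add_div]
  · exact (Commute.refl _).smul_left _ |>.smul_right _

lemma expIH_neg_apply (hbar : ℝ) (Hop : H →L[ℂ] H) (a : ℝ) (v : H) :
    expIH hbar Hop (-a) (expIH hbar Hop a v) = v := by
  have : expIH hbar Hop (-a) * expIH hbar Hop a = expIH hbar Hop 0 := by
    rw [expIH_add]; norm_num
  have h0 : expIH hbar Hop 0 = 1 := by
    simp [expIH, NormedSpace.exp_zero]
  calc expIH hbar Hop (-a) (expIH hbar Hop a v)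
      = (expIH hbar Hop (-a) * expIH hbar Hop a) v := rfl
    _ = v := by rw [this, h0]; rfl

lemma deltaZ_sum (r t z : ℝ) :
    DeltaZ r (z + r) + DeltaZ t (z + r + t) = DeltaZ (r + t) (z + (r + t)) := by
  unfold DeltaZ
  have h1 : z + r < r ↔ z < 0 := by constructor <;> intro h <;> linarith
  have h2 : z + r + t < t ↔ z + r < 0 := by constructor <;> intro h <;> linarith
  have h3 : z + (r + t) < r + t ↔ z < 0 := by constructor <;> intro h <;> linarith
  have h4 : z + (r + t) < 0 ↔ z + r + t < 0 := by constructor <;> intro h <;> linarith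
  rw [if_congr h1 rfl rfl, if_congr h2 rfl rfl, if_congr h3 rfl rfl, if_congr h4 rfl rfl]
  ring

/-- Each `V^t` is unitary on `L²(ℝ, H)` (it is a surjective `L²`-isometry by the
group law) and `t ↦ V^t` is a one-parameter group: `V^r V^t = V^{r+t}`. -/
theorem Vgrp_unitary_group (hbar : ℝ) (hh : 0 < hbar)
    (Hop : H →L[ℂ] H) (hH : IsSelfAdjoint Hop)
    (S : unitary (H →L[ℂ] H)) :
    (∀ (t : ℝ) (χ : ℝ → H),
      eLpNorm (Vgrp hbar Hop S t χ) 2 volume = eLpNorm χ 2 volume) ∧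
    (∀ (r t : ℝ) (χ : ℝ → H),
      Vgrp hbar Hop S r (Vgrp hbar Hop S t χ) = Vgrp hbar Hop S (r + t) χ) := by
  constructor
  · intro t χ
    have hnorm : ∀ z, ‖Vgrp hbar Hop S t χ z‖ = ‖χ (z + t)‖ := by
      intro z
      unfold Vgrp
      rw [ContinuousLinearMap.norm_map_of_mem_unitary (expIH_mem_unitary hbar Hop hH z),
        ContinuousLinearMap.norm_map_of_mem_unitary (S ^ DeltaZ t (z + t)).property,
        ContinuousLinearMap.norm_map_of_mem_unitary (expIH_mem_unitary hbar Hop hH _)]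
    rw [eLpNorm_congr_norm_ae (ae_of_all _ hnorm)]
    rw [eLpNorm_eq_lintegral_rpow_enorm_toReal (by norm_num) (by norm_num),
      eLpNorm_eq_lintegral_rpow_enorm_toReal (p := 2) (by norm_num) (by norm_num)]
    congr 1
    exact lintegral_add_right_eq_self (fun z => (‖χ z‖ₑ : ENNReal) ^ ((2:ENNReal).toReal)) t
  · intro r t χ
    funext z
    unfold Vgrp
    rw [expIH_neg_apply]
    have hz : z + r + t = z + (r + t) := by ring
    have hS : ∀ v : H,
        ((S ^ DeltaZ r (z + r) : unitary (H →L[ℂ] H)) : H →L[ℂ] H)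
          (((S ^ DeltaZ t (z + r + t) : unitary (H →L[ℂ] H)) : H →L[ℂ] H) v)
        = ((S ^ DeltaZ (r + t) (z + (r + t)) : unitary (H →L[ℂ] H)) : H →L[ℂ] H) v := by
      intro v
      rw [← deltaZ_sum r t z, zpow_add S]
      rfl
    rw [hz] at hS ⊢
    rw [hS]

end
end

section
/- Let g ∈ L²((−∞, κ°], h) with ‖g‖ ≤ 1, m > 0, t ∈ ℝ, and for κ > κ° + m define I(κ°, κ) = (1/2π)∫_{−∞}^{κ°} ‖(e^{−i(k + ε(κ−k) − κ)t} − 1) g(k)‖² dk, where ε(k) = √(k² + m²). Then I(κ°, κ) → 0 as κ → ∞; moreover if additionally |t| m²/(κ − κ°) ≤ 1 then I(κ°, κ) ≤ (|t| m²/(κ − κ°))² ‖g‖². -/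
open MeasureTheory Filter Topology Real

lemma aux_exp (y : ℝ) : ‖Complex.exp ((y:ℂ) * Complex.I) - 1‖ ≤ |y| := by
  have hsq : ‖Complex.exp ((y:ℂ) * Complex.I) - 1‖ ^ 2 = 2 - 2 * Real.cos y := by
    rw [Complex.sq_norm, Complex.normSq_apply]
    simp only [Complex.sub_re, Complex.sub_im, Complex.exp_ofReal_mul_I_re,
      Complex.exp_ofReal_mul_I_im, Complex.one_re, Complex.one_im]
    nlinarith [Real.sin_sq_add_cos_sq y]
  have h2 : 2 - 2 * Real.cos y = 4 * Real.sin (y/2) ^ 2 := by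
    have hc := Real.cos_two_mul (y/2)
    rw [show 2*(y/2) = y by ring] at hc
    have hs := Real.sin_sq_add_cos_sq (y/2)
    nlinarith
  have h3 : ‖Complex.exp ((y:ℂ) * Complex.I) - 1‖ ^ 2 ≤ y ^ 2 := by
    rw [hsq, h2]
    nlinarith [Real.sin_sq_le_sq (x := y/2)]
  calc ‖Complex.exp ((y:ℂ) * Complex.I) - 1‖
      = Real.sqrt (‖Complex.exp ((y:ℂ) * Complex.I) - 1‖ ^ 2) := by
        rw [Real.sqrt_sq (norm_nonneg _)]
    _ ≤ Real.sqrt (y ^ 2) := Real.sqrt_le_sqrt h3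
    _ = |y| := Real.sqrt_sq_eq_abs y

lemma aux_theta (m κ₀ κ k : ℝ) (hm : 0 < m) (hκ : κ₀ < κ) (hk : k ≤ κ₀) :
    0 ≤ k + Real.sqrt ((κ - k) ^ 2 + m ^ 2) - κ ∧
    k + Real.sqrt ((κ - k) ^ 2 + m ^ 2) - κ ≤ m ^ 2 / (κ - κ₀) := by
  set u := κ - k with hu
  have hu0 : 0 < κ - κ₀ := by linarith
  have huu : κ - κ₀ ≤ u := by simp [hu]; linarith
  have hup : 0 < u := lt_of_lt_of_le hu0 huu
  constructor
  · have : u ≤ Real.sqrt (u ^ 2 + m ^ 2) := by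
      calc u = Real.sqrt (u ^ 2) := by rw [Real.sqrt_sq hup.le]
        _ ≤ _ := Real.sqrt_le_sqrt (by nlinarith)
    linarith [this]
  · have h1 : Real.sqrt (u ^ 2 + m ^ 2) ≤ u + m ^ 2 / (2 * u) := by
      have hkey : u ^ 2 + m ^ 2 ≤ (u + m ^ 2 / (2 * u)) ^ 2 := by
        have he : u * (m ^ 2 / (2 * u)) = m ^ 2 / 2 := by field_simp
        nlinarith [sq_nonneg (m ^ 2 / (2 * u))]
      calc Real.sqrt (u ^ 2 + m ^ 2) ≤ Real.sqrt ((u + m ^ 2 / (2 * u)) ^ 2) :=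
            Real.sqrt_le_sqrt hkey
        _ = u + m ^ 2 / (2 * u) := Real.sqrt_sq (by positivity)
    have h2 : m ^ 2 / (2 * u) ≤ m ^ 2 / (κ - κ₀) := by
      apply div_le_div_of_nonneg_left (by positivity) hu0
      linarith
    linarith

/-- Key ultrarelativistic estimate: for `g ∈ L²((−∞,κ°], h)` with
`(1/2π)∫‖g‖² ≤ 1`, `m > 0` and
`I(κ°,κ) = (1/2π)∫_{−∞}^{κ°} ‖(e^{−i(k + ε(κ−k) − κ)t} − 1) g(k)‖² dk` with
`ε(k) = √(k² + m²)`, one has `I(κ°,κ) → 0` as `κ → ∞`, and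
`I(κ°,κ) ≤ (|t| m²/(κ − κ°))² ‖g‖²` whenever `κ > κ° + m` and
`|t| m²/(κ − κ°) ≤ 1`. -/
theorem ultrarelativistic_estimate
    {h : Type*} [NormedAddCommGroup h] [InnerProductSpace ℂ h] [CompleteSpace h]
    (m κ₀ t : ℝ) (hm : 0 < m)
    (g : ℝ → h) (hmeas : AEStronglyMeasurable g volume)
    (hint : Integrable (fun k => ‖g k‖ ^ 2) (volume.restrict (Set.Iic κ₀)))
    (hN : (1 / (2 * π)) * ∫ k in Set.Iic κ₀, ‖g k‖ ^ 2 ≤ 1) :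
    Tendsto (fun κ : ℝ => (1 / (2 * π)) * ∫ k in Set.Iic κ₀,
        ‖(Complex.exp (-Complex.I * (↑(k + Real.sqrt ((κ - k) ^ 2 + m ^ 2) - κ)) * (t : ℂ))
            - 1) • g k‖ ^ 2)
      atTop (𝓝 0) ∧
    ∀ κ : ℝ, κ₀ + m < κ → |t| * m ^ 2 / (κ - κ₀) ≤ 1 →
      (1 / (2 * π)) * (∫ k in Set.Iic κ₀,
          ‖(Complex.exp (-Complex.I * (↑(k + Real.sqrt ((κ - k) ^ 2 + m ^ 2) - κ)) * (t : ℂ))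
              - 1) • g k‖ ^ 2) ≤
        (|t| * m ^ 2 / (κ - κ₀)) ^ 2 * ((1 / (2 * π)) * ∫ k in Set.Iic κ₀, ‖g k‖ ^ 2) := by
  set E : ℝ → ℝ → ℂ := fun κ k =>
    Complex.exp (-Complex.I * (↑(k + Real.sqrt ((κ - k) ^ 2 + m ^ 2) - κ)) * (t : ℂ)) - 1
    with hE
  set C : ℝ → ℝ := fun κ => |t| * m ^ 2 / (κ - κ₀) with hC
  -- pointwise bound on the scalar
  have hEbound : ∀ κ, κ₀ < κ → ∀ k ≤ κ₀, ‖E κ k‖ ≤ C κ := by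
    intro κ hκ k hk
    set θ := k + Real.sqrt ((κ - k) ^ 2 + m ^ 2) - κ with hθ
    obtain ⟨hθ0, hθle⟩ := aux_theta m κ₀ κ k hm hκ hk
    have harg : -Complex.I * (θ:ℂ) * (t:ℂ) = ((-(θ * t) : ℝ) : ℂ) * Complex.I := by
      push_cast; ring
    have := aux_exp (-(θ * t))
    rw [hE]
    simp only [← hθ, harg]
    refine this.trans ?_
    rw [abs_neg, abs_mul]
    have h1 : |θ| = θ := abs_of_nonneg hθ0
    have h2 : θ ≤ m ^ 2 / (κ - κ₀) := hθle
    rw [h1, hC]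
    have ht : 0 ≤ |t| := abs_nonneg t
    calc θ * |t| ≤ (m ^ 2 / (κ - κ₀)) * |t| :=
          mul_le_mul_of_nonneg_right h2 ht
      _ = |t| * m ^ 2 / (κ - κ₀) := by ring
  have hC0 : ∀ κ, κ₀ < κ → 0 ≤ C κ := by
    intro κ hκ
    have : (0:ℝ) < κ - κ₀ := by linarith
    positivity
  -- pointwise bound on the squared integrand
  have hptwise : ∀ κ, κ₀ < κ → ∀ k ∈ Set.Iic κ₀,
      ‖E κ k • g k‖ ^ 2 ≤ (C κ) ^ 2 * ‖g k‖ ^ 2 := by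
    intro κ hκ k hk
    rw [norm_smul, mul_pow]
    exact mul_le_mul_of_nonneg_right
      (pow_le_pow_left₀ (norm_nonneg _) (hEbound κ hκ k hk) 2) (by positivity)
  -- continuity / measurability of the integrand
  have hEm : ∀ κ, AEStronglyMeasurable (fun k => ‖E κ k • g k‖ ^ 2)
      (volume.restrict (Set.Iic κ₀)) := by
    intro κ
    have hcont : Continuous (fun k : ℝ => E κ k) := by
      rw [hE]
      fun_prop
    exact (((hcont.aestronglyMeasurable.restrict).smul
      (hmeas.restrict)).norm.pow 2)
  -- integrability
  have hIntOn : ∀ κ, κ₀ < κ → Integrable (fun k => ‖E κ k • g k‖ ^ 2)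
      (volume.restrict (Set.Iic κ₀)) := by
    intro κ hκ
    refine Integrable.mono' (hint.const_mul ((C κ) ^ 2)) (hEm κ) ?_
    rw [ae_restrict_iff' measurableSet_Iic]
    filter_upwards with k hk
    rw [Real.norm_of_nonneg (by positivity)]
    exact hptwise κ hκ k hk
  -- integral bound
  have hB : ∀ κ, κ₀ < κ →
      (∫ k in Set.Iic κ₀, ‖E κ k • g k‖ ^ 2) ≤
        (C κ) ^ 2 * ∫ k in Set.Iic κ₀, ‖g k‖ ^ 2 := by
    intro κ hκ
    calc (∫ k in Set.Iic κ₀, ‖E κ k • g k‖ ^ 2)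
        ≤ ∫ k in Set.Iic κ₀, (C κ) ^ 2 * ‖g k‖ ^ 2 :=
          setIntegral_mono_on (hIntOn κ hκ) (hint.const_mul _)
            measurableSet_Iic (hptwise κ hκ)
      _ = (C κ) ^ 2 * ∫ k in Set.Iic κ₀, ‖g k‖ ^ 2 := integral_const_mul _ _
  have hπ : (0:ℝ) < 1 / (2 * π) := by positivity
  constructor
  · -- tendsto
    have hClim : Tendsto C atTop (𝓝 0) := by
      rw [hC]
      exact Tendsto.div_atTop tendsto_const_nhds
        (tendsto_atTop_add_const_right atTop (-κ₀) tendsto_id)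
    have hUlim : Tendsto (fun κ => (C κ) ^ 2 *
        ((1 / (2 * π)) * ∫ k in Set.Iic κ₀, ‖g k‖ ^ 2)) atTop (𝓝 0) := by
      have := (hClim.pow 2).mul_const ((1 / (2 * π)) * ∫ k in Set.Iic κ₀, ‖g k‖ ^ 2)
      simpa using this
    refine tendsto_of_tendsto_of_tendsto_of_le_of_le' tendsto_const_nhds hUlim ?_ ?_
    · filter_upwards with κ
      have : 0 ≤ ∫ k in Set.Iic κ₀, ‖E κ k • g k‖ ^ 2 :=
        integral_nonneg fun k => by positivity
      positivity
    · filter_upwards [eventually_gt_atTop κ₀] with κ hκ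
      have := mul_le_mul_of_nonneg_left (hB κ hκ) hπ.le
      calc (1 / (2 * π)) * ∫ k in Set.Iic κ₀, ‖E κ k • g k‖ ^ 2
          ≤ (1 / (2 * π)) * ((C κ) ^ 2 * ∫ k in Set.Iic κ₀, ‖g k‖ ^ 2) := this
        _ = (C κ) ^ 2 * ((1 / (2 * π)) * ∫ k in Set.Iic κ₀, ‖g k‖ ^ 2) := by ring
  · intro κ hκ _
    have hκ' : κ₀ < κ := by linarith
    have := mul_le_mul_of_nonneg_left (hB κ hκ') hπ.le
    calc (1 / (2 * π)) * ∫ k in Set.Iic κ₀, ‖E κ k • g k‖ ^ 2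
        ≤ (1 / (2 * π)) * ((C κ) ^ 2 * ∫ k in Set.Iic κ₀, ‖g k‖ ^ 2) := this
      _ = (C κ) ^ 2 * ((1 / (2 * π)) * ∫ k in Set.Iic κ₀, ‖g k‖ ^ 2) := by ring
end
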